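/- Let X be a compact metric space, r : X → X continuous, surjective, finite-to-one, with the backward orbit of every point dense in X. Let W ∈ C(X) be nonnegative with R_W 1 = 1, with finitely many zeroes, and with no W-cycles. Suppose λ ∈ ℂ with |λ| = 1 and λ ≠ 1, and h ∈ C(X), h ≠ 0, satisfies R_W h = λ h. Then h = λ · (h ∘ r). If in addition r has at least one periodic point, then λ is a root of unity, and if p is the smallest positive integer with λ^p = 1, there exists a partition of X into disjoint compact open sets A_0, …, A_{p−1} such that r(A_k) = A_{k+1} for k ∈ {0,…,p−2}, r(A_{p−1}) = A_0, h is constant equal to h_k on A_k, and h_k = λ h_{k+1} for k ∈ {0,…,p−2}. -/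

import Mathlib

open MeasureTheory Filter Topology

/-- The Ruelle transfer operator on complex-valued functions:
`R_W f (x) = ∑_{y ∈ r⁻¹(x)} W(y) f(y)`. -/
noncomputable def RuelleOpC {X : Type*} (r : X → X) (W : X → ℝ) (f : X → ℂ) (x : X) : ℂ :=
  ∑ᶠ y ∈ r ⁻¹' {x}, (W y : ℂ) * f y

/-- `C` is an `n`-cycle for `r` (for some `n ≥ 1`, the minimal period):
`C = {x, r x, …, r^[n-1] x}` with `r^[n] x = x`. -/
def IsCycle {X : Type*} (r : X → X) (C : Set X) : Prop :=
  ∃ (x : X) (n : ℕ), 0 < n ∧ r^[n] x = x ∧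
    (∀ m : ℕ, 0 < m → r^[m] x = x → n ≤ m) ∧
    C = (fun k => r^[k] x) '' Set.Iio n

/-- A `W`-cycle: a cycle on which `W` is identically `1`. -/
def IsWCycle {X : Type*} (r : X → X) (W : X → ℝ) (C : Set X) : Prop :=
  IsCycle r C ∧ ∀ y ∈ C, W y = 1

/-- W-positive reachability: there is an `n ≥ 1` with `r^[n] y = x` and `W > 0`
along `y, r y, …, r^[n-1] y`. -/
def ReachesPos {X : Type*} (r : X → X) (W : X → ℝ) (y x : X) : Prop :=
  ∃ n : ℕ, 0 < n ∧ r^[n] y = x ∧ ∀ k < n, 0 < W (r^[k] y)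

lemma ReachesPos.trans' {X : Type*} {r : X → X} {W : X → ℝ} {z y x : X}
    (h1 : ReachesPos r W z y) (h2 : ReachesPos r W y x) : ReachesPos r W z x := by
  obtain ⟨n, hn, hny, hw1⟩ := h1
  obtain ⟨m, hm, hmx, hw2⟩ := h2
  refine ⟨m + n, by omega, ?_, ?_⟩
  · rw [Function.iterate_add_apply, hny, hmx]
  · intro k hk
    rcases lt_or_ge k n with hkn | hkn
    · exact hw1 k hkn
    · have : k = (k - n) + n := by omega
      rw [this, Function.iterate_add_apply, hny]
      exact hw2 _ (by omega)

lemma exists_pos_preimage {X : Type*} (r : X → X) (hr_fin : ∀ x : X, (r ⁻¹' {x}).Finite)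
    (W : X → ℝ) (hW_nonneg : ∀ x, 0 ≤ W x)
    (hW1 : ∀ x : X, (∑ᶠ y ∈ r ⁻¹' {x}, W y) = 1) (x : X) :
    ∃ d : X, r d = x ∧ 0 < W d := by
  have h1 := hW1 x
  rw [finsum_mem_eq_finite_toFinset_sum _ (hr_fin x)] at h1
  have : ∃ y ∈ (hr_fin x).toFinset, W y ≠ 0 := by
    by_contra hc
    push_neg at hc
    rw [Finset.sum_eq_zero hc] at h1
    norm_num at h1
  obtain ⟨y, hy, hWy⟩ := this
  rw [Set.Finite.mem_toFinset, Set.mem_preimage, Set.mem_singleton_iff] at hy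
  exact ⟨y, hy, lt_of_le_of_ne (hW_nonneg y) (Ne.symm hWy)⟩

lemma W_le_one {X : Type*} (r : X → X) (hr_fin : ∀ x : X, (r ⁻¹' {x}).Finite)
    (W : X → ℝ) (hW_nonneg : ∀ x, 0 ≤ W x)
    (hW1 : ∀ x : X, (∑ᶠ y ∈ r ⁻¹' {x}, W y) = 1) (y : X) : W y ≤ 1 := by
  have h1 := hW1 (r y)
  rw [finsum_mem_eq_finite_toFinset_sum _ (hr_fin (r y))] at h1
  rw [← h1]
  exact Finset.single_le_sum (fun i _ => hW_nonneg i)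
    (by rw [Set.Finite.mem_toFinset]; exact rfl)

lemma cycle_pos_all {X : Type*} {r : X → X} {W : X → ℝ} {c : X} {t : ℕ}
    (ht : 0 < t) (htc : r^[t] c = c) (htW : ∀ s < t, 0 < W (r^[s] c)) :
    ∀ s, 0 < W (r^[s] c) := by
  have hper : Function.IsPeriodicPt r t c := htc
  intro s
  rw [← Function.IsPeriodicPt.iterate_mod_apply hper s]
  exact htW _ (Nat.mod_lt _ ht)

/-- The key combinatorial lemma: with finitely many zeroes of `W`, no `W`-cycles,
and dense backward orbits, the `W`-positive backward orbit of any point is dense. -/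
lemma reach_dense {X : Type*} [TopologicalSpace X]
    (r : X → X) (hr_fin : ∀ x : X, (r ⁻¹' {x}).Finite)
    (hdense : ∀ x : X, Dense {y : X | ∃ n : ℕ, 0 < n ∧ r^[n] y = x})
    (W : X → ℝ) (hW_nonneg : ∀ x, 0 ≤ W x)
    (hW_zeroes : {x : X | W x = 0}.Finite)
    (hW1 : ∀ x : X, (∑ᶠ y ∈ r ⁻¹' {x}, W y) = 1)
    (hnoWcycle : ¬∃ C : Set X, IsWCycle r W C)
    (x₀ : X) : Dense {y | ReachesPos r W y x₀} := by
  classical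
  by_contra hnd
  rw [dense_iff_inter_open] at hnd
  push_neg at hnd
  obtain ⟨U, hU, hUne, hUdisj⟩ := hnd
  set Q : Set X := {q | ∀ y, ReachesPos r W y q → y ∉ U} with hQdef
  have hx₀Q : x₀ ∈ Q := by
    intro y hy hyU
    have : y ∈ U ∩ {y | ReachesPos r W y x₀} := ⟨hyU, hy⟩
    rw [hUdisj] at this; exact this
  have hQprop : ∀ q ∈ Q, ∀ d, ReachesPos r W d q → d ∈ Q :=
    fun q hq d hd y hy => hq y (hy.trans' hd)
  choose pp hpp1 hpp2 using exists_pos_preimage r hr_fin W hW_nonneg hW1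
  -- step: from q ∈ Q produce a zero z such that pp (r z) reaches q
  have hstep : ∀ q ∈ Q, ∃ z, W z = 0 ∧ ReachesPos r W (pp (r z)) q := by
    intro q hq
    obtain ⟨y, hyU, n, hn, hny⟩ := dense_iff_inter_open.mp (hdense q) U hU hUne
    have hyNR : ¬ ReachesPos r W y q := fun hr => hq y hr hyU
    have hzero : ∃ k, k < n ∧ W (r^[k] y) = 0 := by
      by_contra hc
      push_neg at hc
      exact hyNR ⟨n, hn, hny,
        fun k hk => lt_of_le_of_ne (hW_nonneg _) (Ne.symm (hc k hk))⟩
    obtain ⟨k₁, hk₁n, hk₁W⟩ := hzero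
    set P : ℕ → Prop := fun k => W (r^[k] y) = 0 ∧ k < n with hPdef
    set k₀ := Nat.findGreatest P n with hk₀def
    have hk₀P : P k₀ := Nat.findGreatest_spec (le_of_lt hk₁n) ⟨hk₁W, hk₁n⟩
    have hgt : ∀ j, k₀ < j → j < n → 0 < W (r^[j] y) := by
      intro j hj hjn
      have hnp : ¬ P j := Nat.findGreatest_is_greatest hj (le_of_lt hjn)
      rcases eq_or_lt_of_le (hW_nonneg (r^[j] y)) with he | hl
      · exact absurd ⟨he.symm, hjn⟩ hnp
      · exact hl
    refine ⟨r^[k₀] y, hk₀P.1, ?_⟩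
    have hrz : r (r^[k₀] y) = r^[k₀+1] y := (Function.iterate_succ_apply' r k₀ y).symm
    have h1 : ReachesPos r W (pp (r (r^[k₀] y))) (r^[k₀+1] y) := by
      refine ⟨1, one_pos, ?_, ?_⟩
      · simpa [hrz] using hpp1 (r (r^[k₀] y))
      · intro k hk
        interval_cases k
        simpa using hpp2 (r (r^[k₀] y))
    rcases eq_or_lt_of_le (Nat.succ_le_of_lt hk₀P.2) with he | hl
    · rw [show k₀ + 1 = n from he, hny] at h1; exact h1
    · refine h1.trans' ⟨n - (k₀+1), by omega, ?_, ?_⟩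
      · rw [← Function.iterate_add_apply]
        have hq1 : n - (k₀ + 1) + (k₀ + 1) = n := by omega
        rw [hq1, hny]
      · intro k hk
        rw [← Function.iterate_add_apply]
        exact hgt _ (by omega) (by omega)
  -- the finite set of possible "next" points
  set Zimg : Set X := pp '' (r '' {x | W x = 0}) with hZimg
  have hZimgFin : Zimg.Finite := (hW_zeroes.image r).image pp
  -- main claim: every q ∈ Q is reached by a W-positive periodic point
  have hmain : ∀ q ∈ Q, ∃ c, (∃ t, 0 < t ∧ r^[t] c = c ∧ ∀ s < t, 0 < W (r^[s] c)) ∧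
      ReachesPos r W c q := by
    intro q hq
    have hnext : ∀ a : {a : X // a ∈ Q}, ∃ d : {a : X // a ∈ Q},
        ReachesPos r W d.1 a.1 ∧ d.1 ∈ Zimg := by
      rintro ⟨a, ha⟩
      obtain ⟨z, hz, hreach⟩ := hstep a ha
      exact ⟨⟨pp (r z), hQprop a ha _ hreach⟩, hreach, ⟨r z, ⟨z, hz, rfl⟩, rfl⟩⟩
    choose F hF1 hF2 using hnext
    set seq : ℕ → {a : X // a ∈ Q} := fun m => F^[m] ⟨q, hq⟩ with hseqdef
    have hseqsucc : ∀ m, seq (m+1) = F (seq m) := fun m =>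
      Function.iterate_succ_apply' F m ⟨q, hq⟩
    have hseq : ∀ m, ReachesPos r W (seq (m+1)).1 (seq m).1 := by
      intro m; rw [hseqsucc]; exact hF1 _
    have hseqZ : ∀ m, (seq (m+1)).1 ∈ Zimg := by
      intro m; rw [hseqsucc]; exact hF2 _
    have hchain : ∀ a b, a < b → ReachesPos r W (seq b).1 (seq a).1 := by
      intro a b hab
      induction b with
      | zero => omega
      | succ m ih =>
        rcases Nat.lt_succ_iff_lt_or_eq.mp hab with hlt | heq
        · exact (hseq m).trans' (ih hlt)
        · rw [heq]; exact hseq m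
    have hninj : ¬ Function.Injective (fun m => (seq (m+1)).1) := by
      intro hinj
      have hsub : Set.range (fun m => (seq (m+1)).1) ⊆ Zimg :=
        Set.range_subset_iff.mpr hseqZ
      exact (hZimgFin.subset hsub).not_infinite (Set.infinite_range_of_injective hinj)
    obtain ⟨i, j, hij, hne⟩ := Function.not_injective_iff.mp hninj
    have hgen : ∀ i j : ℕ, i < j → (seq (i+1)).1 = (seq (j+1)).1 →
        ∃ c, (∃ t, 0 < t ∧ r^[t] c = c ∧ ∀ s < t, 0 < W (r^[s] c)) ∧
          ReachesPos r W c q := by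
      intro i j hlt heq
      have hcc : ReachesPos r W (seq (i+1)).1 (seq (i+1)).1 := by
        have hcj := hchain (i+1) (j+1) (by omega)
        rwa [← heq] at hcj
      obtain ⟨t, ht, htc, htW⟩ := hcc
      refine ⟨(seq (i+1)).1, ⟨t, ht, htc, htW⟩, ?_⟩
      have := hchain 0 (i+1) (by omega)
      simpa [hseqdef] using this
    rcases hne.lt_or_gt with hlt | hlt
    · exact hgen i j hlt hij
    · exact hgen j i hlt hij.symm
  -- apply to x₀, get a W-positive cycle
  obtain ⟨c, ⟨t, ht, htc, htW⟩, hcx⟩ := hmain x₀ hx₀Q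
  have hposall : ∀ s, 0 < W (r^[s] c) := cycle_pos_all ht htc htW
  have hper : Function.IsPeriodicPt r t c := htc
  set n := Function.minimalPeriod r c with hn
  have hnpos : 0 < n := hper.minimalPeriod_pos ht
  have hnper : r^[n] c = c := Function.iterate_minimalPeriod
  set C : Set X := (fun k => r^[k] c) '' Set.Iio n with hC
  have hcycle : IsCycle r C :=
    ⟨c, n, hnpos, hnper, fun m hm hmx => Function.IsPeriodicPt.minimalPeriod_le hm hmx, rfl⟩
  have hnotall : ¬ ∀ y ∈ C, W y = 1 := fun hall => hnoWcycle ⟨C, hcycle, hall⟩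
  push_neg at hnotall
  obtain ⟨y, hyC, hyW⟩ := hnotall
  obtain ⟨s, hs, hsy⟩ := hyC
  rw [Set.mem_Iio] at hs
  have hyWlt : W y < 1 :=
    lt_of_le_of_ne (W_le_one r hr_fin W hW_nonneg hW1 y) hyW
  -- another preimage of r y with positive weight
  have hd : ∃ d, r d = r y ∧ 0 < W d ∧ d ≠ y := by
    by_contra hc
    push_neg at hc
    have h1 := hW1 (r y)
    rw [finsum_mem_eq_finite_toFinset_sum _ (hr_fin (r y))] at h1
    have hsum : ∑ u ∈ (hr_fin (r y)).toFinset, W u = W y := by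
      apply Finset.sum_eq_single_of_mem y (by rw [Set.Finite.mem_toFinset]; exact rfl)
      intro b hb hbne
      rw [Set.Finite.mem_toFinset] at hb
      rcases eq_or_lt_of_le (hW_nonneg b) with he | hl
      · exact he.symm
      · exact absurd (hc b hb hl) hbne
    rw [hsum] at h1
    exact absurd h1 (ne_of_lt hyWlt)
  obtain ⟨d, hdr, hdW, hdne⟩ := hd
  have hrd : r d = r^[s+1] c := by
    rw [hdr, ← hsy, ← Function.iterate_succ_apply' r s c]
  -- d reaches x₀
  have hdreach : ReachesPos r W d x₀ := by
    have h1 : ReachesPos r W d (r^[s+1] c) := by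
      refine ⟨1, one_pos, by simpa using hrd, ?_⟩
      intro k hk; interval_cases k; simpa using hdW
    have h2 : ReachesPos r W (r^[s+1] c) c := by
      have hmlt : (s+1) % t < t := Nat.mod_lt _ ht
      refine ⟨t - ((s+1) % t), by omega, ?_, ?_⟩
      · rw [← Function.iterate_add_apply]
        have harith : t - ((s+1) % t) + (s+1) = t * (1 + (s+1)/t) := by
          have hmd := Nat.mod_add_div (s+1) t
          have hexp : t * (1 + (s+1)/t) = t + t * ((s+1)/t) := by ring
          omega
        rw [harith]
        exact (hper.mul_const _).eq
      · intro k hk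
        rw [← Function.iterate_add_apply]
        exact hposall _
    exact h1.trans' (h2.trans' hcx)
  have hdQ : d ∈ Q := hQprop x₀ hx₀Q d hdreach
  -- a periodic point reaching d
  obtain ⟨c₂, ⟨t₂, ht₂, ht₂c, _⟩, hreach₂⟩ := hmain d hdQ
  obtain ⟨u, hu, huc, _⟩ := hreach₂
  have hdper : r^[t₂] d = d := by
    rw [← huc, ← Function.iterate_add_apply, add_comm, Function.iterate_add_apply, ht₂c]
  -- d = r^[t₂ + s] c
  have hdeq : d = r^[t₂ + s] c := by
    conv_lhs => rw [← hdper]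
    have ht₂1 : t₂ = (t₂ - 1) + 1 := by omega
    rw [ht₂1, Function.iterate_add_apply]
    simp only [Function.iterate_one]
    rw [hrd, ← Function.iterate_add_apply]
    congr 1
    omega
  -- conclude d = y, a contradiction
  have hmodeq : ∀ a : ℕ, r^[a] c = r^[a % n] c := fun a =>
    (Function.iterate_mod_minimalPeriod_eq).symm
  have hkey : r^[t₂ + s + 1] c = r^[s+1] c := by
    have hh : r d = r^[t₂ + s + 1] c := by
      rw [hdeq, ← Function.iterate_succ_apply' r (t₂ + s) c]
    rw [← hh, hrd]
  have he1 : r^[(t₂ + s + 1) % n] c = r^[(s+1) % n] c :=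
    (hmodeq _).symm.trans (hkey.trans (hmodeq _))
  have he2 : (t₂ + s + 1) % n = (s + 1) % n :=
    Function.iterate_injOn_Iio_minimalPeriod
      (Set.mem_Iio.mpr (Nat.mod_lt _ hnpos)) (Set.mem_Iio.mpr (Nat.mod_lt _ hnpos)) he1
  have hdvd : n ∣ t₂ := by
    have hme : Nat.ModEq n (t₂ + (s + 1)) (0 + (s + 1)) := by
      unfold Nat.ModEq
      simpa [add_assoc] using he2
    have := hme.add_right_cancel' (s+1)
    rwa [Nat.modEq_zero_iff_dvd] at this
  have hdy : d = y := by
    obtain ⟨k, hk⟩ := hdvd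
    rw [hdeq, ← hsy]
    have hrw : t₂ + s = s + n * k := by omega
    rw [hrw, hmodeq (s + n * k), Nat.add_mul_mod_self_left, ← hmodeq s]
  exact hdne hdy

/-- Strict convexity at a point of maximal modulus: every `W`-positive preimage `y`
of such a point `x` satisfies `h y = λ h x`. -/
lemma maxpt_pre {X : Type*} (r : X → X) (hr_fin : ∀ x : X, (r ⁻¹' {x}).Finite)
    (W : X → ℝ) (hW_nonneg : ∀ x, 0 ≤ W x)
    (hW1 : ∀ x : X, (∑ᶠ y ∈ r ⁻¹' {x}, W y) = 1)
    (lam : ℂ) (hlam_abs : ‖lam‖ = 1)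
    (h : X → ℂ) (hh_eig : ∀ x, RuelleOpC r W h x = lam * h x)
    (M : ℝ) (hMpos : 0 < M) (hM : ∀ y, ‖h y‖ ≤ M)
    (x : X) (hx : ‖h x‖ = M)
    (y : X) (hy : r y = x) (hWy : 0 < W y) : h y = lam * h x := by
  classical
  set a : ℂ := lam * h x with ha
  have haabs : ‖a‖ = M := by
    rw [ha, norm_mul, hlam_abs, one_mul, hx]
  set s : Finset X := (hr_fin x).toFinset with hs
  have heig : ∑ u ∈ s, (W u : ℂ) * h u = a := by
    have := hh_eig x
    rw [RuelleOpC, finsum_mem_eq_finite_toFinset_sum _ (hr_fin x)] at this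
    exact this
  have hsumW : ∑ u ∈ s, W u = 1 := by
    have := hW1 x
    rwa [finsum_mem_eq_finite_toFinset_sum _ (hr_fin x)] at this
  have hconj : (starRingEnd ℂ) a * a = (M : ℂ)^2 := by
    rw [mul_comm, Complex.mul_conj, Complex.normSq_eq_norm_sq, haabs]
    push_cast
    ring
  have hbound : ∀ u, ((starRingEnd ℂ) a * h u).re ≤ M^2 := by
    intro u
    calc ((starRingEnd ℂ) a * h u).re ≤ ‖(starRingEnd ℂ) a * h u‖ :=
          Complex.re_le_norm _
      _ = M * ‖h u‖ := by rw [norm_mul, Complex.norm_conj, haabs]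
      _ ≤ M * M := by exact mul_le_mul_of_nonneg_left (hM u) (le_of_lt hMpos)
      _ = M^2 := by ring
  have hkey : ∑ u ∈ s, W u * (M^2 - ((starRingEnd ℂ) a * h u).re) = 0 := by
    have e1 : ∑ u ∈ s, W u * ((starRingEnd ℂ) a * h u).re = M^2 := by
      have e2 : ∀ u, W u * ((starRingEnd ℂ) a * h u).re
          = ((starRingEnd ℂ) a * ((W u : ℂ) * h u)).re := by
        intro u
        rw [mul_left_comm, Complex.re_ofReal_mul]
      rw [Finset.sum_congr rfl (fun u _ => e2 u), ← Complex.re_sum, ← Finset.mul_sum,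
        heig, hconj]
      simp [pow_two]
    have e3 : ∑ u ∈ s, W u * M^2 = M^2 := by
      rw [← Finset.sum_mul, hsumW, one_mul]
    rw [Finset.sum_congr rfl (fun u _ => mul_sub (W u) (M^2) _), Finset.sum_sub_distrib, e1, e3,
      sub_self]
  have hterm : W y * (M^2 - ((starRingEnd ℂ) a * h y).re) = 0 := by
    have hnn : ∀ u ∈ s, 0 ≤ W u * (M^2 - ((starRingEnd ℂ) a * h u).re) :=
      fun u _ => mul_nonneg (hW_nonneg u) (sub_nonneg.mpr (hbound u))
    have hymem : y ∈ s := by rw [hs, Set.Finite.mem_toFinset]; exact hy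
    exact (Finset.sum_eq_zero_iff_of_nonneg hnn).mp hkey y hymem
  have hre : ((starRingEnd ℂ) a * h y).re = M^2 := by
    rcases mul_eq_zero.mp hterm with h0 | h0
    · exact absurd h0 (ne_of_gt hWy)
    · linarith [sub_eq_zero.mp h0]
  have habs2 : ‖(starRingEnd ℂ) a * h y‖ = M^2 := by
    have hle : ‖(starRingEnd ℂ) a * h y‖ ≤ M^2 := by
      rw [norm_mul, Complex.norm_conj, haabs]
      calc M * ‖h y‖ ≤ M * M := mul_le_mul_of_nonneg_left (hM y) (le_of_lt hMpos)
        _ = M^2 := by ring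
    have hge : M^2 ≤ ‖(starRingEnd ℂ) a * h y‖ :=
      hre ▸ Complex.re_le_norm _
    linarith
  have hz : (starRingEnd ℂ) a * h y = (M:ℂ)^2 := by
    apply Complex.ext
    · rw [hre]; push_cast; simp [pow_two]
    · have hsq := Complex.sq_norm ((starRingEnd ℂ) a * h y)
      rw [habs2] at hsq
      have him : ((starRingEnd ℂ) a * h y).im ^ 2 = 0 := by
        rw [Complex.normSq_apply] at hsq
        nlinarith [hre]
      have him0 := pow_eq_zero_iff (n := 2) (by norm_num) |>.mp him
      rw [him0]
      push_cast
      simp [pow_two]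
  have hane : (starRingEnd ℂ) a ≠ 0 := by
    simp only [ne_eq, map_eq_zero]
    intro h0
    rw [h0] at haabs
    simp at haabs
    linarith
  have hfin : (starRingEnd ℂ) a * (h y - a) = 0 := by
    rw [mul_sub, hz, hconj, sub_self]
  rcases mul_eq_zero.mp hfin with h0 | h0
  · exact absurd h0 hane
  · rw [ha] at h0
    exact sub_eq_zero.mp h0

theorem stmt10
    {X : Type*} [MetricSpace X] [CompactSpace X] [MeasurableSpace X] [BorelSpace X]
    (r : X → X) (hr_cont : Continuous r) (hr_surj : Function.Surjective r)
    (hr_fin : ∀ x : X, (r ⁻¹' {x}).Finite)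
    -- the backward orbit of every point is dense
    (hdense : ∀ x : X, Dense {y : X | ∃ n : ℕ, 0 < n ∧ r^[n] y = x})
    (W : X → ℝ) (hW_cont : Continuous W) (hW_nonneg : ∀ x, 0 ≤ W x)
    (hW_zeroes : {x : X | W x = 0}.Finite)
    (hW1 : ∀ x : X, (∑ᶠ y ∈ r ⁻¹' {x}, W y) = 1)
    -- there are no `W`-cycles
    (hnoWcycle : ¬∃ C : Set X, IsWCycle r W C)
    -- `lam` is a peripheral eigenvalue `≠ 1` with continuous eigenfunction `h ≠ 0`
    (lam : ℂ) (hlam_abs : ‖lam‖ = 1) (hlam_ne : lam ≠ 1)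
    (h : X → ℂ) (hh_cont : Continuous h) (hh_ne : h ≠ 0)
    (hh_eig : ∀ x, RuelleOpC r W h x = lam * h x) :
    -- then `h = λ · (h ∘ r)`,
    (∀ x : X, h x = lam * h (r x)) ∧
    -- and if `r` has a periodic point, then `lam` is a root of unity and for the
    -- minimal `p` with `lam ^ p = 1` there is the asserted partition of `X`
    ((∃ (x : X) (n : ℕ), 0 < n ∧ r^[n] x = x) →
      (∃ m : ℕ, 0 < m ∧ lam ^ m = 1) ∧
      ∀ p : ℕ, 0 < p → lam ^ p = 1 → (∀ q : ℕ, 0 < q → lam ^ q = 1 → p ≤ q) →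
        ∃ A : ℕ → Set X,
          (∀ k < p, IsCompact (A k) ∧ IsOpen (A k)) ∧
          (∀ j < p, ∀ k < p, j ≠ k → Disjoint (A j) (A k)) ∧
          (⋃ k ∈ Set.Iio p, A k) = Set.univ ∧
          (∀ k : ℕ, k < p - 1 → r '' A k = A (k + 1)) ∧
          r '' A (p - 1) = A 0 ∧
          ∃ c : ℕ → ℂ,
            (∀ k < p, ∀ x ∈ A k, h x = c k) ∧
            (∀ k : ℕ, k < p - 1 → c k = lam * c (k + 1))) := by
  classical
  -- X is nonempty and |h| attains a positive maximum
  have hXne : Nonempty X := by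
    by_contra hempty
    apply hh_ne
    funext x
    exact absurd ⟨x⟩ hempty
  obtain ⟨x₀, -, hmax⟩ := IsCompact.exists_isMaxOn isCompact_univ
    Set.univ_nonempty (continuous_norm.comp hh_cont).continuousOn
  set M : ℝ := ‖h x₀‖ with hM
  have hMle : ∀ y, ‖h y‖ ≤ M := fun y => hmax (Set.mem_univ y)
  have hMpos : 0 < M := by
    have : ∃ x, h x ≠ 0 := by
      by_contra hc
      push_neg at hc
      exact hh_ne (funext hc)
    obtain ⟨x₁, hx₁⟩ := this
    calc (0:ℝ) < ‖h x₁‖ := by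
          simpa using hx₁
      _ ≤ M := hMle x₁
  -- along W-positive backward orbits of x₀ the modulus stays maximal
  have hreachM : ∀ (n : ℕ) (y : X), r^[n] y = x₀ → (∀ k < n, 0 < W (r^[k] y)) →
      ‖h y‖ = M := by
    intro n
    induction n with
    | zero =>
      intro y hy _
      rw [Function.iterate_zero_apply] at hy
      rw [hy]
    | succ n ih =>
      intro y hy hWk
      have hry : ‖h (r y)‖ = M := by
        apply ih (r y)
        · rw [← Function.iterate_succ_apply]; exact hy
        · intro k hk
          have := hWk (k+1) (by omega)
          rwa [Function.iterate_succ_apply] at this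
      have heq := maxpt_pre r hr_fin W hW_nonneg hW1 lam hlam_abs h hh_eig M hMpos hMle
        (r y) hry y rfl (by simpa using hWk 0 (by omega))
      rw [heq, norm_mul, hlam_abs, one_mul, hry]
  -- hence |h| ≡ M everywhere
  have hSdense : Dense {x : X | ‖h x‖ = M} := by
    apply Dense.mono _ (reach_dense r hr_fin hdense W hW_nonneg hW_zeroes hW1 hnoWcycle x₀)
    rintro y ⟨n, hn, hny, hWk⟩
    exact hreachM n y hny hWk
  have hScl : IsClosed {x : X | ‖h x‖ = M} :=
    isClosed_eq (continuous_norm.comp hh_cont) continuous_const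
  have hMall : ∀ x, ‖h x‖ = M := by
    intro x
    have huniv : {x : X | ‖h x‖ = M} = Set.univ := by
      rw [← hScl.closure_eq, hSdense.closure_eq]
    exact (huniv ▸ Set.mem_univ x : x ∈ {x : X | ‖h x‖ = M})
  have hne0 : ∀ x, h x ≠ 0 := by
    intro x h0
    have := hMall x
    rw [h0] at this
    simp at this
    exact absurd this.symm (ne_of_gt hMpos)
  -- the set where W ≠ 0 is dense (X has no isolated points unless W ≡ 1)
  have hWposdense : Dense {y : X | W y ≠ 0} := by
    rw [dense_iff_inter_open]
    intro V hV hVne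
    by_contra hc
    rw [Set.not_nonempty_iff_eq_empty] at hc
    have hVZ : V ⊆ {x | W x = 0} := by
      intro v hv
      by_contra hWv
      have : v ∈ V ∩ {y | W y ≠ 0} := ⟨hv, hWv⟩
      rw [hc] at this; exact this
    obtain ⟨z, hz⟩ := hVne
    have hzopen : IsOpen ({z} : Set X) := by
      have hfin : (V \ {z}).Finite := (hW_zeroes.subset hVZ).diff
      have hclosed : IsClosed (V \ {z}) := hfin.isClosed
      have hsingl : ({z} : Set X) = V ∩ (V \ {z})ᶜ := by
        ext w
        simp only [Set.mem_singleton_iff, Set.mem_inter_iff, Set.mem_compl_iff, Set.mem_diff,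
          Set.mem_singleton_iff]
        constructor
        · rintro rfl; exact ⟨hz, fun hw => hw.2 rfl⟩
        · rintro ⟨hwV, hw⟩
          by_contra hne
          exact hw ⟨hwV, hne⟩
      rw [hsingl]
      exact hV.inter hclosed.isOpen_compl
    have horbit : ∀ w : X, ∃ n, 0 < n ∧ r^[n] z = w := by
      intro w
      obtain ⟨y, hy1, hy2⟩ := dense_iff_inter_open.mp (hdense w) {z} hzopen ⟨z, rfl⟩
      rw [Set.mem_singleton_iff] at hy1
      rw [← hy1]
      exact hy2
    obtain ⟨n₁, hn₁, hn₁z⟩ := horbit z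
    have hper : Function.IsPeriodicPt r n₁ z := hn₁z
    have hnpos : 0 < Function.minimalPeriod r z := hper.minimalPeriod_pos hn₁
    have huniv : (Set.univ : Set X) ⊆
        (fun k => r^[k] z) '' Set.Iio (Function.minimalPeriod r z) := by
      intro w _
      obtain ⟨m, hm, hmz⟩ := horbit w
      exact ⟨m % Function.minimalPeriod r z, Set.mem_Iio.mpr (Nat.mod_lt _ hnpos), by
        simpa [Function.iterate_mod_minimalPeriod_eq] using hmz⟩
    have hXfin : Finite X := by
      have : (Set.univ : Set X).Finite :=
        Set.Finite.subset ((Set.finite_Iio _).image _) huniv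
      exact Set.finite_univ_iff.mp this
    have hrinj : Function.Injective r := Finite.injective_iff_surjective.mpr hr_surj
    have hW1' : ∀ y : X, W y = 1 := by
      intro y
      have hfib : r ⁻¹' {r y} = {y} := by
        ext u
        simp only [Set.mem_preimage, Set.mem_singleton_iff]
        exact ⟨fun hu => hrinj hu, fun hu => by rw [hu]⟩
      have := hW1 (r y)
      rwa [hfib, finsum_mem_singleton] at this
    have h0 : W z = 0 := hVZ hz
    rw [hW1' z] at h0
    norm_num at h0
  -- Conclusion 1: h = λ · (h ∘ r)
  have c1 : ∀ x : X, h x = lam * h (r x) := by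
    have hcl : IsClosed {x : X | h x - lam * h (r x) = 0} :=
      isClosed_eq (hh_cont.sub (continuous_const.mul (hh_cont.comp hr_cont))) continuous_const
    have hsub : {y : X | W y ≠ 0} ⊆ {x | h x - lam * h (r x) = 0} := by
      intro y hWy
      have hWypos : 0 < W y := lt_of_le_of_ne (hW_nonneg y) (Ne.symm hWy)
      have heq := maxpt_pre r hr_fin W hW_nonneg hW1 lam hlam_abs h hh_eig M hMpos hMle
        (r y) (hMall (r y)) y rfl hWypos
      simp only [Set.mem_setOf_eq, heq, sub_self]
    have hd : Dense {x : X | h x - lam * h (r x) = 0} := hWposdense.mono hsub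
    intro x
    have huniv : {x : X | h x - lam * h (r x) = 0} = Set.univ := by
      rw [← hcl.closure_eq, hd.closure_eq]
    have : x ∈ {x : X | h x - lam * h (r x) = 0} := huniv ▸ Set.mem_univ x
    exact sub_eq_zero.mp this
  refine ⟨c1, ?_⟩
  rintro ⟨xp, np, hnp, hxp⟩
  -- iterated form of conclusion 1
  have hiter : ∀ (k : ℕ) (x : X), h x = lam ^ k * h (r^[k] x) := by
    intro k
    induction k with
    | zero => intro x; simp
    | succ k ih =>
      intro x
      rw [ih x, c1 (r^[k] x), ← Function.iterate_succ_apply' r k x, pow_succ]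
      ring
  have hlam0 : lam ≠ 0 := by
    intro h0
    rw [h0] at hlam_abs
    simp at hlam_abs
  constructor
  · -- λ is a root of unity
    refine ⟨np, hnp, ?_⟩
    have hh1 := hiter np xp
    rw [hxp] at hh1
    nth_rewrite 1 [← one_mul (h xp)] at hh1
    exact (mul_right_cancel₀ (hne0 xp) hh1).symm
  · intro p hp hp1 hmin
    set A : ℕ → Set X := fun k => {x | lam ^ k * h x = h x₀} with hA
    have hmod : ∀ m : ℕ, lam ^ m = lam ^ (m % p) := by
      intro m
      conv_lhs => rw [← Nat.div_add_mod m p]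
      rw [pow_add, pow_mul, hp1, one_pow, one_mul]
    have hpowinj : ∀ j, j < p → ∀ k, k < p → lam ^ j = lam ^ k → j = k := by
      have haux : ∀ j k, j ≤ k → k < p → lam ^ j = lam ^ k → j = k := by
        intro j k hle hk he
        have hsplit : lam ^ j * lam ^ (k - j) = lam ^ j * 1 := by
          rw [← pow_add, mul_one, he]
          congr 1
          omega
        have hkj : lam ^ (k - j) = 1 := mul_left_cancel₀ (pow_ne_zero j hlam0) hsplit
        by_contra hne
        have : 0 < k - j := by omega
        have := hmin (k - j) this hkj
        omega
      intro j hj k hk he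
      rcases le_total j k with hle | hle
      · exact haux j k hle hk he
      · exact (haux k j hle hj he.symm).symm
    have huniq : ∀ (x : X) (a b : ℕ), lam ^ a * h x = h x₀ → lam ^ b * h x = h x₀ →
        a % p = b % p := by
      intro x a b hax hbx
      have : lam ^ a * h x = lam ^ b * h x := by rw [hax, hbx]
      have hab : lam ^ a = lam ^ b := mul_right_cancel₀ (hne0 x) this
      rw [hmod a, hmod b] at hab
      exact hpowinj _ (Nat.mod_lt _ hp) _ (Nat.mod_lt _ hp) hab
    have hAcl : ∀ k, IsClosed (A k) := fun k =>
      isClosed_eq (continuous_const.mul hh_cont) continuous_const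
    -- the union over k < p is everything
    have hUnion : (⋃ k ∈ Set.Iio p, A k) = Set.univ := by
      have hclU : IsClosed (⋃ k ∈ Set.Iio p, A k) :=
        Set.Finite.isClosed_biUnion (Set.finite_Iio p) (fun k _ => hAcl k)
      have hsubd : {y : X | ∃ n : ℕ, 0 < n ∧ r^[n] y = x₀} ⊆ ⋃ k ∈ Set.Iio p, A k := by
        rintro y ⟨m, hm, hmy⟩
        have hy : h y = lam ^ m * h x₀ := by
          rw [hiter m y, hmy]
        obtain ⟨k, hkp, hkm⟩ : ∃ k, k < p ∧ lam ^ (k + m) = 1 := by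
          rcases Nat.eq_zero_or_pos (m % p) with h0 | hposm
          · refine ⟨0, hp, ?_⟩
            rw [zero_add, hmod, h0, pow_zero]
          · refine ⟨p - m % p, by omega, ?_⟩
            rw [hmod]
            have h1 : m % p < p := Nat.mod_lt _ hp
            have h2 := Nat.mod_add_div m p
            have h3 : p - m % p + m = p * (1 + m / p) := by
              have h4 : p * (1 + m / p) = p + p * (m / p) := by ring
              omega
            rw [h3, Nat.mul_mod_right, pow_zero]
        refine Set.mem_biUnion (Set.mem_Iio.mpr hkp) ?_
        show lam ^ k * h y = h x₀
        rw [hy, ← mul_assoc, ← pow_add, hkm, one_mul]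
      have hdU : Dense (⋃ k ∈ Set.Iio p, A k) := (hdense x₀).mono hsubd
      rw [← hclU.closure_eq, hdU.closure_eq]
    have hcover : ∀ x : X, ∃ k, k < p ∧ x ∈ A k := by
      intro x
      have : x ∈ ⋃ k ∈ Set.Iio p, A k := hUnion ▸ Set.mem_univ x
      obtain ⟨k, hk, hxk⟩ := Set.mem_iUnion₂.mp this
      exact ⟨k, Set.mem_Iio.mp hk, hxk⟩
    have hmem_uniq : ∀ (x : X) (j : ℕ), j < p → ∀ (k : ℕ), k < p →
        x ∈ A j → x ∈ A k → j = k := by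
      intro x j hj k hk hxj hxk
      have := huniq x j k hxj hxk
      rwa [Nat.mod_eq_of_lt hj, Nat.mod_eq_of_lt hk] at this
    -- forward images
    have himg : ∀ k, r '' A k ⊆ A (k+1) := by
      rintro k _ ⟨x, hx, rfl⟩
      show lam ^ (k+1) * h (r x) = h x₀
      have : lam ^ (k + 1) * h (r x) = lam ^ k * (lam * h (r x)) := by
        rw [pow_succ]; ring
      rw [this, ← c1 x]
      exact hx
    have hApA0 : A p = A 0 := by
      ext x
      show lam ^ p * h x = h x₀ ↔ lam ^ 0 * h x = h x₀
      rw [hp1, pow_zero]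
    refine ⟨A, ?_, ?_, hUnion, ?_, ?_, ?_⟩
    · -- compact and open
      intro k hk
      have hcompl : (A k)ᶜ = ⋃ j ∈ Set.Iio p \ {k}, A j := by
        ext x
        simp only [Set.mem_compl_iff, Set.mem_iUnion, Set.mem_diff, Set.mem_Iio,
          Set.mem_singleton_iff, exists_prop]
        constructor
        · intro hxk
          obtain ⟨j, hj, hxj⟩ := hcover x
          exact ⟨j, ⟨hj, fun hjk => hxk (hjk ▸ hxj)⟩, hxj⟩
        · rintro ⟨j, ⟨hj, hjk⟩, hxj⟩ hxk
          exact hjk (hmem_uniq x j hj k hk hxj hxk)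
      have hopen : IsOpen (A k) := by
        rw [← isClosed_compl_iff, hcompl]
        exact Set.Finite.isClosed_biUnion ((Set.finite_Iio p).diff) (fun j _ => hAcl j)
      exact ⟨(hAcl k).isCompact, hopen⟩
    · -- disjointness
      intro j hj k hk hjk
      rw [Set.disjoint_left]
      intro x hxj hxk
      exact hjk (hmem_uniq x j hj k hk hxj hxk)
    · -- r '' A k = A (k+1) for k < p - 1
      intro k hk
      apply Set.Subset.antisymm (himg k)
      intro a ha
      obtain ⟨b, rfl⟩ := hr_surj a
      obtain ⟨j, hj, hbj⟩ := hcover b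
      have hrb : r b ∈ A (j+1) := himg j ⟨b, hbj, rfl⟩
      have hjp : j + 1 < p ∨ j + 1 = p := by omega
      rcases hjp with hjp | hjp
      · have : j + 1 = k + 1 := hmem_uniq (r b) (j+1) hjp (k+1) (by omega) hrb ha
        have hjk : j = k := by omega
        exact ⟨b, hjk ▸ hbj, rfl⟩
      · -- j + 1 = p: then r b ∈ A p = A 0, but also r b ∈ A (k+1) with k+1 < p, k+1 ≠ 0
        have hrb0 : r b ∈ A 0 := hApA0 ▸ (hjp ▸ hrb)
        have : 0 = k + 1 := hmem_uniq (r b) 0 hp (k+1) (by omega) hrb0 ha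
        omega
    · -- r '' A (p-1) = A 0
      apply Set.Subset.antisymm
      · intro a ha
        obtain ⟨x, hx, rfl⟩ := ha
        have : r x ∈ A (p - 1 + 1) := himg (p-1) ⟨x, hx, rfl⟩
        rw [show p - 1 + 1 = p by omega, hApA0] at this
        exact this
      · intro a ha
        obtain ⟨b, rfl⟩ := hr_surj a
        obtain ⟨j, hj, hbj⟩ := hcover b
        have hrb : r b ∈ A (j+1) := himg j ⟨b, hbj, rfl⟩
        have hmodeq : (j+1) % p = 0 % p := huniq (r b) (j+1) 0 hrb ha
        rw [Nat.zero_mod] at hmodeq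
        have hjp : j + 1 = p := by
          obtain ⟨c, hc⟩ := Nat.dvd_of_mod_eq_zero hmodeq
          rcases Nat.eq_zero_or_pos c with h0 | hposc
          · subst h0; omega
          · have hle : p * 1 ≤ p * c := Nat.mul_le_mul_left p hposc
            omega
        have : j = p - 1 := by omega
        exact ⟨b, this ▸ hbj, rfl⟩
    · -- the constants
      have hcl : lam * (starRingEnd ℂ) lam = 1 := by
        rw [Complex.mul_conj, Complex.normSq_eq_norm_sq, hlam_abs]
        norm_num
      refine ⟨fun k => ((starRingEnd ℂ) lam) ^ k * h x₀, ?_, ?_⟩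
      · intro k hk x hx
        have hx' : lam ^ k * h x = h x₀ := hx
        calc h x = (((starRingEnd ℂ) lam) * lam) ^ k * h x := by
              rw [mul_comm ((starRingEnd ℂ) lam) lam, hcl, one_pow, one_mul]
          _ = ((starRingEnd ℂ) lam) ^ k * (lam ^ k * h x) := by
              rw [mul_pow]; ring
          _ = ((starRingEnd ℂ) lam) ^ k * h x₀ := by rw [hx']
      · intro k hk
        have : lam * (((starRingEnd ℂ) lam) ^ (k+1) * h x₀)
            = (lam * (starRingEnd ℂ) lam) * (((starRingEnd ℂ) lam) ^ k * h x₀) := by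
          rw [pow_succ]; ring
        rw [this, hcl, one_mul]
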